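/- arXiv:1701.08230 — 3 statements merged into one kernel-verified Lean document; each statement's English description precedes it below -/
import Mathlib

section
/- Fix c with 0 < c < 1, and suppose that for every group a ∈ G the conditional law of p(X) given g(X) = a has positive density on [0,1]. Let d be a decision rule and suppose there exists a group a* ∈ G such that d does not agree almost surely on the event {g(X) = a*} with the threshold rule 1{p(X) ≥ t} for the unique t with μ(p(X) ≥ t | g(X) = a*) = E[d(X) | g(X) = a*]. Then there exists a decision rule d' such that E[d'(X)·(1 − p(X))·1{g(X) = b}] = E[d(X)·(1 − p(X))·1{g(X) = b}] for every b ∈ G (d' has the same false positive rate as d within every group) and u(d',c) > u(d,c). -/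
open MeasureTheory ProbabilityTheory Set

noncomputable section

/-- A probability law on ℝ has positive density on `[0,1]`. -/
def PosDensity01 (ν : Measure ℝ) : Prop :=
  ∃ φ : ℝ → ENNReal,
    ν = volume.withDensity φ ∧
    (∀ᵐ x ∂(volume.restrict (Icc (0:ℝ) 1)), 0 < φ x) ∧
    (∀ᵐ x ∂(volume : Measure ℝ), x ∉ Icc (0:ℝ) 1 → φ x = 0)

private lemma abs_le_one_of_Icc' {x : ℝ} (hx : x ∈ Icc (0:ℝ) 1) : |x| ≤ 1 :=
  abs_le.mpr ⟨by linarith [hx.1], hx.2⟩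

private lemma abs_mul_le_one' {a b : ℝ} (h1 : |a| ≤ 1) (h2 : |b| ≤ 1) : |a * b| ≤ 1 := by
  rw [abs_mul]
  nlinarith [abs_nonneg a, abs_nonneg b]

private lemma abs_sub_Icc' {x y : ℝ} (hx : x ∈ Icc (0:ℝ) 1) (hy : y ∈ Icc (0:ℝ) 1) :
    |x - y| ≤ 1 :=
  abs_le.mpr ⟨by linarith [hx.1, hy.2], by linarith [hx.2, hy.1]⟩

private lemma integrable_of_bound' {α : Type*} [MeasurableSpace α] (ν : Measure α)
    [IsFiniteMeasure ν] {f : α → ℝ} (hf : Measurable f) (C : ℝ)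
    (hC : ∀ x, |f x| ≤ C) : Integrable f ν :=
  ⟨hf.aestronglyMeasurable,
    HasFiniteIntegral.of_bounded (C := C)
      (Filter.Eventually.of_forall fun x => by simpa [Real.norm_eq_abs] using hC x)⟩

/-- if a decision rule `d` fails, on some group `a*`, to agree a.s. with
the threshold rule `1{p(X) ≥ t}` for the unique `t` matching `d`'s detention rate on
`{g(X) = a*}`, then there is a decision rule `d'` with the same group-wise false positive
quantities `E[d(X)(1 − p(X))·1{g(X) = b}]` and strictly higher immediate utility. -/
theorem stmt_14
    {Ω 𝒳 G : Type*} [MeasurableSpace Ω] [MeasurableSpace 𝒳]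
    [Fintype G] [MeasurableSpace G] [MeasurableSingletonClass G]
    (μ : Measure Ω) [IsProbabilityMeasure μ]
    (X : Ω → 𝒳) (hX : Measurable X)
    (Y : Ω → ℝ) (hY : Measurable Y) (hY01 : ∀ ω, Y ω = 0 ∨ Y ω = 1)
    (p : 𝒳 → ℝ) (hp : Measurable p) (hp01 : ∀ x, p x ∈ Icc (0:ℝ) 1)
    (hrisk : ∀ f : 𝒳 → ℝ, Measurable f → (∃ C, ∀ x, |f x| ≤ C) →
      ∫ ω, Y ω * f (X ω) ∂μ = ∫ ω, p (X ω) * f (X ω) ∂μ)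
    (g : 𝒳 → G) (hg : Measurable g)
    (hgpos : ∀ a : G, 0 < μ {ω | g (X ω) = a})
    (hdens : ∀ a : G,
      PosDensity01 (Measure.map (fun ω => p (X ω))
        (ProbabilityTheory.cond μ {ω | g (X ω) = a})))
    (c : ℝ) (hc0 : 0 < c) (hc1 : c < 1)
    (d : 𝒳 → ℝ) (hd : Measurable d) (hd01 : ∀ x, d x ∈ Icc (0:ℝ) 1)
    (hnot : ∃ a : G, ∀ t ∈ Icc (0:ℝ) 1,
      ((μ ({ω | t ≤ p (X ω)} ∩ {ω | g (X ω) = a})).toReal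
          / (μ {ω | g (X ω) = a}).toReal
        = (∫ ω in {ω | g (X ω) = a}, d (X ω) ∂μ) / (μ {ω | g (X ω) = a}).toReal) →
      ¬ (∀ᵐ ω ∂μ, g (X ω) = a → d (X ω) = (if t ≤ p (X ω) then (1:ℝ) else 0))) :
    ∃ d' : 𝒳 → ℝ, Measurable d' ∧ (∀ x, d' x ∈ Icc (0:ℝ) 1) ∧
      (∀ b : G,
        ∫ ω in {ω | g (X ω) = b}, d' (X ω) * (1 - p (X ω)) ∂μ
          = ∫ ω in {ω | g (X ω) = b}, d (X ω) * (1 - p (X ω)) ∂μ) ∧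
      (∫ ω, Y ω * d (X ω) ∂μ) - c * ∫ ω, d (X ω) ∂μ
        < (∫ ω, Y ω * d' (X ω) ∂μ) - c * ∫ ω, d' (X ω) ∂μ := by
  classical
  obtain ⟨a, ha⟩ := hnot
  have hpX : Measurable fun ω => p (X ω) := hp.comp hX
  have hdX : Measurable fun ω => d (X ω) := hd.comp hX
  set A : Set Ω := {ω | g (X ω) = a} with hAdef
  have hA : MeasurableSet A := (hg.comp hX) (measurableSet_singleton a)
  have hμA0 : μ A ≠ 0 := (hgpos a).ne'
  have hμAtop : μ A ≠ ⊤ := measure_ne_top μ A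
  -- atomlessness of the conditional distribution of p (X ·)
  have hatom : ∀ x : ℝ, μ ({ω | p (X ω) = x} ∩ A) = 0 := by
    intro x
    obtain ⟨φ, hφeq, -, -⟩ := hdens a
    have h1 : Measure.map (fun ω => p (X ω)) (ProbabilityTheory.cond μ A) {x} = 0 := by
      rw [hφeq, withDensity_apply _ (measurableSet_singleton x),
        Measure.restrict_eq_zero.mpr Real.volume_singleton, lintegral_zero_measure]
    rw [Measure.map_apply hpX (measurableSet_singleton x),
      ProbabilityTheory.cond_apply hA] at h1
    rcases mul_eq_zero.mp h1 with h | h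
    · exact absurd (ENNReal.inv_eq_zero.mp h) hμAtop
    · have hset : A ∩ ((fun ω => p (X ω)) ⁻¹' {x}) = {ω | p (X ω) = x} ∩ A := by
        ext ω; simp [and_comm]
      rwa [hset] at h
  have hatomae : ∀ x : ℝ, ∀ᵐ ω ∂μ.restrict A, p (X ω) ≠ x := by
    intro x
    have hm : MeasurableSet {ω | p (X ω) = x} := hpX (measurableSet_singleton x)
    have hz : μ.restrict A {ω | p (X ω) = x} = 0 := by
      rw [Measure.restrict_apply hm]; exact hatom x
    rw [ae_iff]
    simpa [not_not] using hz
  -- boundedness / integrability facts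
  have hone_sub : ∀ ω, (1 - p (X ω)) ∈ Icc (0:ℝ) 1 := fun ω =>
    ⟨by linarith [(hp01 (X ω)).2], by linarith [(hp01 (X ω)).1]⟩
  have hd1p_nonneg : ∀ ω, 0 ≤ d (X ω) * (1 - p (X ω)) := fun ω =>
    mul_nonneg (hd01 _).1 (hone_sub ω).1
  have hd1p_int : Integrable (fun ω => d (X ω) * (1 - p (X ω))) (μ.restrict A) :=
    integrable_of_bound' _ (hdX.mul (measurable_const.sub hpX)) 1
      (fun ω => abs_mul_le_one' (abs_le_one_of_Icc' (hd01 (X ω)))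
        (abs_le_one_of_Icc' (hone_sub ω)))
  set T : ℝ := ∫ ω in A, d (X ω) * (1 - p (X ω)) ∂μ with hTdef
  by_cases hT0 : T = 0
  · -- degenerate case : d vanishes a.e. on A, contradicting hnot at t = 1
    exfalso
    have h0 : ∀ᵐ ω ∂μ.restrict A, d (X ω) * (1 - p (X ω)) = 0 := by
      have := (integral_eq_zero_iff_of_nonneg (fun ω => hd1p_nonneg ω) hd1p_int).mp hT0
      filter_upwards [this] with ω hω using hω
    have hd0 : ∀ᵐ ω ∂μ.restrict A, d (X ω) = 0 := by
      filter_upwards [h0, hatomae 1] with ω h1 h2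
      have hplt : p (X ω) < 1 := lt_of_le_of_ne (hp01 (X ω)).2 h2
      rcases mul_eq_zero.mp h1 with h | h
      · exact h
      · exact absurd h (by linarith)
    have hag : ∀ᵐ ω ∂μ.restrict A, d (X ω) = (if (1:ℝ) ≤ p (X ω) then (1:ℝ) else 0) := by
      filter_upwards [hd0, hatomae 1] with ω h1 h2
      have hplt : p (X ω) < 1 := lt_of_le_of_ne (hp01 (X ω)).2 h2
      rw [h1, if_neg (not_le.mpr hplt)]
    have hdint0 : ∫ ω in A, d (X ω) ∂μ = 0 := by
      rw [integral_congr_ae hd0, integral_zero]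
    have hnum : μ ({ω | (1:ℝ) ≤ p (X ω)} ∩ A) = 0 := by
      apply measure_mono_null _ (hatom 1)
      rintro ω ⟨h1, h2⟩
      exact ⟨le_antisymm (hp01 (X ω)).2 h1, h2⟩
    have hcond : (μ ({ω | (1:ℝ) ≤ p (X ω)} ∩ A)).toReal / (μ A).toReal
        = (∫ ω in A, d (X ω) ∂μ) / (μ A).toReal := by
      rw [hnum, hdint0]; simp
    exact ha 1 (by norm_num) hcond ((ae_restrict_iff' hA).mp hag)
  -- main case : T > 0
  have hTpos : 0 < T := lt_of_le_of_ne
    (setIntegral_nonneg hA (fun ω _ => hd1p_nonneg ω)) (Ne.symm hT0)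
  have hite01 : ∀ (s : ℝ) (x : 𝒳), (if s ≤ p x then (1:ℝ) else 0) ∈ Icc (0:ℝ) 1 := by
    intro s x; by_cases h : s ≤ p x <;> simp [h, Set.mem_Icc]
  have hind_meas : ∀ s : ℝ, Measurable fun ω => (if s ≤ p (X ω) then (1:ℝ) else 0) :=
    fun s => Measurable.ite (measurableSet_le measurable_const hpX)
      measurable_const measurable_const
  have hFint : ∀ s : ℝ, Integrable
      (fun ω => (if s ≤ p (X ω) then (1:ℝ) else 0) * (1 - p (X ω))) (μ.restrict A) :=
    fun s => integrable_of_bound' _ ((hind_meas s).mul (measurable_const.sub hpX)) 1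
      (fun ω => abs_mul_le_one' (abs_le_one_of_Icc' (hite01 s (X ω)))
        (abs_le_one_of_Icc' (hone_sub ω)))
  set F : ℝ → ℝ :=
    fun s => ∫ ω in A, (if s ≤ p (X ω) then (1:ℝ) else 0) * (1 - p (X ω)) ∂μ with hFdef
  have hFcont : Continuous F := by
    rw [continuous_iff_continuousAt]
    intro s₀
    rw [hFdef]
    apply continuousAt_of_dominated (bound := fun _ => (1:ℝ))
    · exact Filter.Eventually.of_forall fun s =>
        ((hind_meas s).mul (measurable_const.sub hpX)).aestronglyMeasurable
    · exact Filter.Eventually.of_forall fun s => Filter.Eventually.of_forall fun ω => by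
        simpa [Real.norm_eq_abs] using
          abs_mul_le_one' (abs_le_one_of_Icc' (hite01 s (X ω)))
            (abs_le_one_of_Icc' (hone_sub ω))
    · exact integrable_const 1
    · filter_upwards [hatomae s₀] with ω hω
      apply ContinuousAt.mul _ continuousAt_const
      rcases hω.lt_or_gt with h | h
      · -- p (X ω) < s₀
        apply Filter.EventuallyEq.continuousAt (y := (0:ℝ))
        filter_upwards [isOpen_Ioi.eventually_mem (show s₀ ∈ Ioi (p (X ω)) from h)] with s hs
        simp [not_le.mpr (mem_Ioi.mp hs)]
      · -- s₀ < p (X ω)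
        apply Filter.EventuallyEq.continuousAt (y := (1:ℝ))
        filter_upwards [isOpen_Iio.eventually_mem (show s₀ ∈ Iio (p (X ω)) from h)] with s hs
        simp [le_of_lt (mem_Iio.mp hs)]
  have hF1 : F 1 = 0 := by
    rw [hFdef]
    have hz : ∀ ω, (if (1:ℝ) ≤ p (X ω) then (1:ℝ) else 0) * (1 - p (X ω)) = 0 := by
      intro ω
      by_cases h : (1:ℝ) ≤ p (X ω)
      · have : p (X ω) = 1 := le_antisymm (hp01 (X ω)).2 h
        simp [h, this]
      · simp [h]
    simp [hz]
  have hF0 : T ≤ F 0 := by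
    rw [hFdef, hTdef]
    apply integral_mono hd1p_int (hFint 0)
    intro ω
    have h0 : (0:ℝ) ≤ p (X ω) := (hp01 (X ω)).1
    simp only [if_pos h0, one_mul]
    nlinarith [(hd01 (X ω)).2, (hone_sub ω).1]
  obtain ⟨s, hsIcc, hFs⟩ := intermediate_value_Icc' (by norm_num : (0:ℝ) ≤ 1)
    hFcont.continuousOn ⟨by rw [hF1]; exact hTpos.le, hF0⟩
  have hs1 : s < 1 := lt_of_le_of_ne hsIcc.2 (fun heq => hT0 (by rw [← hFs, heq, hF1]))
  have hs0 : 0 ≤ s := hsIcc.1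
  simp only [hFdef] at hFs
  -- the new rule
  set D : 𝒳 → ℝ := fun x => if g x = a then (if s ≤ p x then (1:ℝ) else 0) else d x with hDdef
  have hDmeas : Measurable D :=
    Measurable.ite (show MeasurableSet {x | g x = a} from hg (measurableSet_singleton a))
      (Measurable.ite (measurableSet_le measurable_const hp) measurable_const measurable_const)
      hd
  have hD01 : ∀ x, D x ∈ Icc (0:ℝ) 1 := by
    intro x
    rw [hDdef]
    dsimp only
    split
    · exact hite01 s x
    · exact hd01 x
  -- key quantities
  have hsubb : ∀ ω, |(if s ≤ p (X ω) then (1:ℝ) else 0) - d (X ω)| ≤ 1 :=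
    fun ω => abs_sub_Icc' (hite01 s (X ω)) (hd01 (X ω))
  have hsub_meas : Measurable fun ω => (if s ≤ p (X ω) then (1:ℝ) else 0) - d (X ω) :=
    (hind_meas s).sub hdX
  have hsub_int : Integrable (fun ω => (if s ≤ p (X ω) then (1:ℝ) else 0) - d (X ω))
      (μ.restrict A) := integrable_of_bound' _ hsub_meas 1 hsubb
  have hK_meas : Measurable fun ω =>
      ((if s ≤ p (X ω) then (1:ℝ) else 0) - d (X ω)) * (p (X ω) - s) :=
    hsub_meas.mul (hpX.sub measurable_const)
  have hKb : ∀ ω, |((if s ≤ p (X ω) then (1:ℝ) else 0) - d (X ω)) * (p (X ω) - s)| ≤ 1 :=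
    fun ω => abs_mul_le_one' (hsubb ω) (abs_sub_Icc' (hp01 (X ω)) hsIcc)
  have hKint : Integrable (fun ω =>
      ((if s ≤ p (X ω) then (1:ℝ) else 0) - d (X ω)) * (p (X ω) - s)) (μ.restrict A) :=
    integrable_of_bound' _ hK_meas 1 hKb
  have hK_nonneg : ∀ ω, 0 ≤ ((if s ≤ p (X ω) then (1:ℝ) else 0) - d (X ω)) * (p (X ω) - s) := by
    intro ω
    by_cases h : s ≤ p (X ω)
    · rw [if_pos h]
      exact mul_nonneg (by linarith [(hd01 (X ω)).2]) (by linarith)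
    · rw [if_neg h]
      have := not_le.mp h
      nlinarith [(hd01 (X ω)).1]
  set K : ℝ := ∫ ω in A, ((if s ≤ p (X ω) then (1:ℝ) else 0) - d (X ω)) * (p (X ω) - s) ∂μ
    with hKdef
  have hKpos : 0 < K := by
    rcases (setIntegral_nonneg hA (fun ω _ => hK_nonneg ω)).lt_or_eq with h | h
    · exact h
    · exfalso
      have hz : ∀ᵐ ω ∂μ.restrict A,
          ((if s ≤ p (X ω) then (1:ℝ) else 0) - d (X ω)) * (p (X ω) - s) = 0 := by
        have := (integral_eq_zero_iff_of_nonneg (fun ω => hK_nonneg ω) hKint).mp h.symm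
        filter_upwards [this] with ω hω using hω
      have hag : ∀ᵐ ω ∂μ.restrict A, d (X ω) = (if s ≤ p (X ω) then (1:ℝ) else 0) := by
        filter_upwards [hz, hatomae s] with ω h1 h2
        rcases mul_eq_zero.mp h1 with h3 | h3
        · exact (sub_eq_zero.mp h3).symm
        · exact absurd (by linarith [sub_eq_zero.mp h3] : p (X ω) = s) h2
      have hθd : ∫ ω in A, d (X ω) ∂μ = (μ ({ω | s ≤ p (X ω)} ∩ A)).toReal := by
        rw [integral_congr_ae hag]
        have hSm : MeasurableSet {ω | s ≤ p (X ω)} := measurableSet_le measurable_const hpX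
        have hfi : (fun ω => if s ≤ p (X ω) then (1:ℝ) else 0)
            = Set.indicator {ω | s ≤ p (X ω)} (fun _ => (1:ℝ)) := by
          funext ω; simp only [Set.indicator_apply, Set.mem_setOf_eq]
        rw [hfi, integral_indicator_const (1:ℝ) hSm, measureReal_restrict_apply hSm]
        simp [measureReal_def]
      exact ha s hsIcc (by rw [hθd]) ((ae_restrict_iff' hA).mp hag)
  set E : ℝ := ∫ ω in A, ((if s ≤ p (X ω) then (1:ℝ) else 0) - d (X ω)) ∂μ with hEdef
  have hJint : Integrable (fun ω =>
      ((if s ≤ p (X ω) then (1:ℝ) else 0) - d (X ω)) * (1 - p (X ω))) (μ.restrict A) :=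
    integrable_of_bound' _ (hsub_meas.mul (measurable_const.sub hpX)) 1
      (fun ω => abs_mul_le_one' (hsubb ω) (abs_le_one_of_Icc' (hone_sub ω)))
  have hJ : ∫ ω in A, ((if s ≤ p (X ω) then (1:ℝ) else 0) - d (X ω)) * (1 - p (X ω)) ∂μ = 0 := by
    have heq : (fun ω => ((if s ≤ p (X ω) then (1:ℝ) else 0) - d (X ω)) * (1 - p (X ω)))
        = fun ω => (if s ≤ p (X ω) then (1:ℝ) else 0) * (1 - p (X ω))
            - d (X ω) * (1 - p (X ω)) := by
      funext ω; ring
    rw [heq, integral_sub (hFint s) hd1p_int, hFs, ← hTdef, sub_self]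
  have hE : E * (1 - s) = K := by
    have heq : (fun ω => ((if s ≤ p (X ω) then (1:ℝ) else 0) - d (X ω)) * (1 - s))
        = fun ω => ((if s ≤ p (X ω) then (1:ℝ) else 0) - d (X ω)) * (1 - p (X ω))
            + ((if s ≤ p (X ω) then (1:ℝ) else 0) - d (X ω)) * (p (X ω) - s) := by
      funext ω; ring
    calc E * (1 - s)
        = ∫ ω in A, ((if s ≤ p (X ω) then (1:ℝ) else 0) - d (X ω)) * (1 - s) ∂μ :=
          (integral_mul_const _ _).symm
      _ = ∫ ω in A, (((if s ≤ p (X ω) then (1:ℝ) else 0) - d (X ω)) * (1 - p (X ω))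
            + ((if s ≤ p (X ω) then (1:ℝ) else 0) - d (X ω)) * (p (X ω) - s)) ∂μ := by
          rw [heq]
      _ = 0 + K := by rw [integral_add hJint hKint, hJ, ← hKdef]
      _ = K := by ring
  refine ⟨D, hDmeas, hD01, ?_, ?_⟩
  · -- equal group-wise false positive quantities
    intro b
    by_cases hb : b = a
    · rw [hb, ← hAdef]
      have h1 : ∫ ω in A, D (X ω) * (1 - p (X ω)) ∂μ
          = ∫ ω in A, (if s ≤ p (X ω) then (1:ℝ) else 0) * (1 - p (X ω)) ∂μ := by
        apply setIntegral_congr_fun hA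
        intro ω hω
        have hωa : g (X ω) = a := hω
        simp only [hDdef]
        rw [if_pos hωa]
      rw [h1, hFs]
    · have hBm : MeasurableSet {ω | g (X ω) = b} :=
        (hg.comp hX) (measurableSet_singleton b)
      apply setIntegral_congr_fun hBm
      intro ω hω
      have hωb : g (X ω) = b := hω
      simp only [hDdef]
      rw [if_neg (by rw [hωb]; exact hb)]
  · -- strictly higher utility
    have hd'b : ∀ x, |D x| ≤ 1 := fun x => abs_le_one_of_Icc' (hD01 x)
    have hdb : ∀ x, |d x| ≤ 1 := fun x => abs_le_one_of_Icc' (hd01 x)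
    rw [hrisk d hd ⟨1, hdb⟩, hrisk D hDmeas ⟨1, hd'b⟩]
    have hDX : Measurable fun ω => D (X ω) := hDmeas.comp hX
    have intd : Integrable (fun ω => d (X ω)) μ := integrable_of_bound' μ hdX 1 (fun ω => hdb _)
    have intD : Integrable (fun ω => D (X ω)) μ := integrable_of_bound' μ hDX 1 (fun ω => hd'b _)
    have intpd : Integrable (fun ω => p (X ω) * d (X ω)) μ :=
      integrable_of_bound' μ (hpX.mul hdX) 1
        (fun ω => abs_mul_le_one' (abs_le_one_of_Icc' (hp01 _)) (hdb _))
    have intpD : Integrable (fun ω => p (X ω) * D (X ω)) μ :=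
      integrable_of_bound' μ (hpX.mul hDX) 1
        (fun ω => abs_mul_le_one' (abs_le_one_of_Icc' (hp01 _)) (hd'b _))
    have hcompl : ∀ ω ∉ A, (D (X ω) - d (X ω)) * (p (X ω) - c) = 0 := by
      intro ω hω
      have hωa : ¬ g (X ω) = a := hω
      simp only [hDdef]
      rw [if_neg hωa, sub_self, zero_mul]
    have hR : ∫ ω, (D (X ω) - d (X ω)) * (p (X ω) - c) ∂μ = K + E * (s - c) := by
      rw [← setIntegral_eq_integral_of_forall_compl_eq_zero hcompl]
      have hcong : EqOn (fun ω => (D (X ω) - d (X ω)) * (p (X ω) - c))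
          (fun ω => ((if s ≤ p (X ω) then (1:ℝ) else 0) - d (X ω)) * (p (X ω) - s)
            + ((if s ≤ p (X ω) then (1:ℝ) else 0) - d (X ω)) * (s - c)) A := by
        intro ω hω
        have hωa : g (X ω) = a := hω
        simp only [hDdef]
        rw [if_pos hωa]
        ring
      rw [setIntegral_congr_fun hA hcong,
        integral_add hKint (hsub_int.mul_const (s - c)), integral_mul_const, ← hKdef, ← hEdef]
    have hRpos : 0 < K + E * (s - c) := by
      have h1 : (K + E * (s - c)) * (1 - s) = K * (1 - c) := by linear_combination (s - c) * hE
      nlinarith [h1, mul_pos hKpos (show (0:ℝ) < 1 - c by linarith), hs1]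
    have hdiff : ∫ ω, (D (X ω) - d (X ω)) * (p (X ω) - c) ∂μ
        = ((∫ ω, p (X ω) * D (X ω) ∂μ) - c * ∫ ω, D (X ω) ∂μ)
          - ((∫ ω, p (X ω) * d (X ω) ∂μ) - c * ∫ ω, d (X ω) ∂μ) := by
      have heq : (fun ω => (D (X ω) - d (X ω)) * (p (X ω) - c))
          = fun ω => (p (X ω) * D (X ω) - c * D (X ω)) - (p (X ω) * d (X ω) - c * d (X ω)) := by
        funext ω; ring
      have e1 : ∫ ω, (p (X ω) * D (X ω) - c * D (X ω)) ∂μ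
          = (∫ ω, p (X ω) * D (X ω) ∂μ) - ∫ ω, c * D (X ω) ∂μ :=
        integral_sub intpD (intD.const_mul c)
      have e2 : ∫ ω, (p (X ω) * d (X ω) - c * d (X ω)) ∂μ
          = (∫ ω, p (X ω) * d (X ω) ∂μ) - ∫ ω, c * d (X ω) ∂μ :=
        integral_sub intpd (intd.const_mul c)
      have e3 : ∫ ω, ((p (X ω) * D (X ω) - c * D (X ω)) - (p (X ω) * d (X ω) - c * d (X ω))) ∂μ
          = (∫ ω, (p (X ω) * D (X ω) - c * D (X ω)) ∂μ)
            - ∫ ω, (p (X ω) * d (X ω) - c * d (X ω)) ∂μ :=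
        integral_sub (intpD.sub (intD.const_mul c)) (intpd.sub (intd.const_mul c))
      rw [heq, e3, e1, e2, integral_const_mul, integral_const_mul]
    linarith [hdiff, hR, hRpos]
end
end

section
/- Fix c with 0 < c < 1 and δ ≥ 0, and suppose that for every group a ∈ G the conditional law of p(X) given g(X) = a has positive density on [0,1] and μ(Y = 0, g(X) = a) > 0. Let d be a decision rule whose group-wise false positive rates satisfy |FPR_a(d) − FPR_b(d)| ≤ δ for all a, b ∈ G, where FPR_a(d) = E[d(X) | Y = 0, g(X) = a]. If there is no family of thresholds (t_a)_{a∈G} in [0,1] with d(X) = 1{p(X) ≥ t_{g(X)}} almost surely, then there exists a decision rule d' with FPR_a(d') = FPR_a(d) for every a ∈ G (so d' also satisfies the relaxed constraint) and u(d',c) > u(d,c). -/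
open MeasureTheory ProbabilityTheory Set

noncomputable section

/-- The group-wise false positive rate `FPR_a(d) = E[d(X) | Y = 0, g(X) = a]`. -/
def FPR {Ω 𝒳 G : Type*} [MeasurableSpace Ω]
    (μ : Measure Ω) (X : Ω → 𝒳) (Y : Ω → ℝ) (g : 𝒳 → G) (d : 𝒳 → ℝ) (a : G) : ℝ :=
  (∫ ω in {ω | Y ω = 0 ∧ g (X ω) = a}, d (X ω) ∂μ)
    / (μ {ω | Y ω = 0 ∧ g (X ω) = a}).toReal

/-- if a decision rule `d` has group-wise false positive rates within `δ`
of each other, and `d` is not a.s. equal to any family of group-wise threshold rules,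
then there is a decision rule `d'` with exactly the same group-wise false positive rates
(hence also satisfying the relaxed constraint) and strictly higher immediate utility. -/
theorem stmt_15
    {Ω 𝒳 G : Type*} [MeasurableSpace Ω] [MeasurableSpace 𝒳]
    [Fintype G] [MeasurableSpace G] [MeasurableSingletonClass G]
    (μ : Measure Ω) [IsProbabilityMeasure μ]
    (X : Ω → 𝒳) (hX : Measurable X)
    (Y : Ω → ℝ) (hY : Measurable Y) (hY01 : ∀ ω, Y ω = 0 ∨ Y ω = 1)
    (p : 𝒳 → ℝ) (hp : Measurable p) (hp01 : ∀ x, p x ∈ Icc (0:ℝ) 1)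
    (hrisk : ∀ f : 𝒳 → ℝ, Measurable f → (∃ C, ∀ x, |f x| ≤ C) →
      ∫ ω, Y ω * f (X ω) ∂μ = ∫ ω, p (X ω) * f (X ω) ∂μ)
    (g : 𝒳 → G) (hg : Measurable g)
    (hgpos : ∀ a : G, 0 < μ {ω | g (X ω) = a})
    (hdens : ∀ a : G,
      PosDensity01 (Measure.map (fun ω => p (X ω))
        (ProbabilityTheory.cond μ {ω | g (X ω) = a})))
    (hY0pos : ∀ a : G, 0 < μ {ω | Y ω = 0 ∧ g (X ω) = a})
    (c : ℝ) (hc0 : 0 < c) (hc1 : c < 1)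
    (δ : ℝ) (hδ : 0 ≤ δ)
    (d : 𝒳 → ℝ) (hd : Measurable d) (hd01 : ∀ x, d x ∈ Icc (0:ℝ) 1)
    (hδconstraint : ∀ a b : G, |FPR μ X Y g d a - FPR μ X Y g d b| ≤ δ)
    (hnotthr : ¬ ∃ t : G → ℝ, (∀ a : G, t a ∈ Icc (0:ℝ) 1) ∧
      ∀ᵐ ω ∂μ, d (X ω) = (if t (g (X ω)) ≤ p (X ω) then (1:ℝ) else 0)) :
    ∃ d' : 𝒳 → ℝ, Measurable d' ∧ (∀ x, d' x ∈ Icc (0:ℝ) 1) ∧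
      (∀ a : G, FPR μ X Y g d' a = FPR μ X Y g d a) ∧
      (∫ ω, Y ω * d (X ω) ∂μ) - c * ∫ ω, d (X ω) ∂μ
        < (∫ ω, Y ω * d' (X ω) ∂μ) - c * ∫ ω, d' (X ω) ∂μ := by
  classical
  -- abbreviations
  set q : Ω → ℝ := fun ω => p (X ω) with hqdef
  set e : Ω → ℝ := fun ω => d (X ω) with hedef
  have hq : Measurable q := hp.comp hX
  have he : Measurable e := hd.comp hX
  have hq01 : ∀ ω, q ω ∈ Icc (0:ℝ) 1 := fun ω => hp01 (X ω)
  have he01 : ∀ ω, e ω ∈ Icc (0:ℝ) 1 := fun ω => hd01 (X ω)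
  set A : G → Set Ω := fun a => {ω | g (X ω) = a} with hAdef
  have hA : ∀ a, MeasurableSet (A a) := fun a =>
    (hg.comp hX) (measurableSet_singleton a)
  -- integrability toolkit
  have intg : ∀ (F : Ω → ℝ), Measurable F → (∀ ω, |F ω| ≤ 2) → Integrable F μ := by
    intro F hF hFb
    exact (integrable_const (2:ℝ)).mono' hF.aestronglyMeasurable
      (Filter.Eventually.of_forall (by simpa [Real.norm_eq_abs] using hFb))
  have intgr : ∀ (F : Ω → ℝ) (s : Set Ω), Measurable F → (∀ ω, |F ω| ≤ 2) →
      Integrable F (μ.restrict s) := fun F s hF hFb => (intg F hF hFb).restrict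
  -- atomlessness of the conditional law of q
  have hnull : ∀ s : ℝ, μ {ω | q ω = s} = 0 := by
    intro s
    have hnulla : ∀ a : G, μ (A a ∩ q ⁻¹' {s}) = 0 := by
      intro a
      obtain ⟨φ, hφeq, -, -⟩ := hdens a
      have h1 : (Measure.map (fun ω => p (X ω)) (ProbabilityTheory.cond μ (A a))) {s} = 0 := by
        rw [hφeq, withDensity_apply φ (measurableSet_singleton s),
          setLIntegral_measure_zero _ _ Real.volume_singleton]
      rw [Measure.map_apply hq (measurableSet_singleton s),
        ProbabilityTheory.cond_apply (hA a)] at h1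
      rcases mul_eq_zero.1 h1 with h | h
      · exact absurd h (ENNReal.inv_ne_zero.2 (measure_ne_top μ _))
      · exact h
    have hcov : {ω | q ω = s} ⊆ ⋃ a : G, A a ∩ q ⁻¹' {s} := by
      intro ω hω
      exact mem_iUnion.2 ⟨g (X ω), rfl, hω⟩
    refine le_antisymm ?_ (by simp)
    calc μ {ω | q ω = s} ≤ μ (⋃ a : G, A a ∩ q ⁻¹' {s}) := measure_mono hcov
      _ ≤ ∑' a : G, μ (A a ∩ q ⁻¹' {s}) := measure_iUnion_le _
      _ = 0 := by simp [hnulla]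
  have hnullr : ∀ (a : G) (s : ℝ), (μ.restrict (A a)) {ω | q ω = s} = 0 := by
    intro a s
    refine le_antisymm ?_ (by simp)
    calc (μ.restrict (A a)) {ω | q ω = s} ≤ μ {ω | q ω = s} :=
        Measure.restrict_apply_le _ _
      _ = 0 := hnull s
  have hner : ∀ (a : G) (s : ℝ), ∀ᵐ ω ∂(μ.restrict (A a)), q ω ≠ s := by
    intro a s
    rw [ae_iff]
    simp only [ne_eq, not_not]
    exact hnullr a s
  -- the function H
  set H : G → ℝ → ℝ := fun a tt => ∫ ω in A a, (1 - q ω) * (if tt ≤ q ω then (1:ℝ) else 0) ∂μ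
    with hHdef
  have hHmeas : ∀ tt : ℝ, Measurable fun ω => (1 - q ω) * (if tt ≤ q ω then (1:ℝ) else 0) := by
    intro tt
    exact (measurable_const.sub hq).mul
      (Measurable.ite (measurableSet_le measurable_const hq) measurable_const measurable_const)
  have hHbnd : ∀ (tt : ℝ) (ω : Ω), |(1 - q ω) * (if tt ≤ q ω then (1:ℝ) else 0)| ≤ 2 := by
    intro tt ω
    have h1 := (hq01 ω).1; have h2 := (hq01 ω).2
    rw [abs_mul]
    have : |1 - q ω| ≤ 1 := by rw [abs_le]; constructor <;> linarith
    have : |(if tt ≤ q ω then (1:ℝ) else 0)| ≤ 1 := by split <;> simp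
    calc |1 - q ω| * |(if tt ≤ q ω then (1:ℝ) else 0)| ≤ 1 * 1 := by
          apply mul_le_mul <;> first
            | (rw [abs_le]; constructor <;> linarith)
            | (split <;> simp) | positivity | norm_num
      _ ≤ 2 := by norm_num
  have hHcont : ∀ a, Continuous (H a) := by
    intro a
    rw [continuous_iff_continuousAt]
    intro t₀
    apply continuousAt_of_dominated (bound := fun _ => (2:ℝ))
    · exact Filter.Eventually.of_forall fun tt => (hHmeas tt).aestronglyMeasurable
    · exact Filter.Eventually.of_forall fun tt =>
        Filter.Eventually.of_forall fun ω => by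
          simpa [Real.norm_eq_abs] using hHbnd tt ω
    · exact integrable_const _
    · filter_upwards [hner a t₀] with ω hω
      rcases lt_or_gt_of_ne hω with hlt | hgt
      · -- q ω < t₀ : eventually the indicator is 0
        apply ContinuousAt.congr (continuousAt_const (y := (0:ℝ)))
        filter_upwards [Ioi_mem_nhds hlt] with tt htt
        rw [if_neg (not_le.2 htt), mul_zero]
      · -- t₀ < q ω : eventually the indicator is 1
        apply ContinuousAt.congr (continuousAt_const (y := (1 - q ω)))
        filter_upwards [Iio_mem_nhds hgt] with tt htt
        rw [if_pos (le_of_lt htt), mul_one]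
  have hH1 : ∀ a, H a 1 = 0 := by
    intro a
    have : ∀ ω : Ω, (1 - q ω) * (if (1:ℝ) ≤ q ω then (1:ℝ) else 0) = 0 := by
      intro ω
      rcases le_or_gt 1 (q ω) with h | h
      · have : q ω = 1 := le_antisymm (hq01 ω).2 h
        rw [this, sub_self, zero_mul]
      · rw [if_neg (not_le.2 h), mul_zero]
    rw [hHdef]
    simp only [this, integral_zero]
  set r : G → ℝ := fun a => ∫ ω in A a, (1 - q ω) * e ω ∂μ with hrdef
  have hr0 : ∀ a, 0 ≤ r a := by
    intro a
    exact setIntegral_nonneg (hA a) fun ω _ =>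
      mul_nonneg (by linarith [(hq01 ω).2]) (he01 ω).1
  have hrH0 : ∀ a, r a ≤ H a 0 := by
    intro a
    apply setIntegral_mono_on
    · exact intgr _ _ ((measurable_const.sub hq).mul he)
        (fun ω => by
          have h1 := (hq01 ω).1; have h2 := (hq01 ω).2
          have h3 := (he01 ω).1; have h4 := (he01 ω).2
          rw [abs_mul]
          have ha : |1 - q ω| ≤ 1 := by rw [abs_le]; constructor <;> linarith
          have hb : |e ω| ≤ 1 := by rw [abs_le]; constructor <;> linarith
          nlinarith [abs_nonneg (1 - q ω), abs_nonneg (e ω)])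
    · exact intgr _ _ (hHmeas 0) (hHbnd 0)
    · exact hA a
    · intro ω _
      rw [if_pos (hq01 ω).1, mul_one]
      have := (hq01 ω).2
      nlinarith [(he01 ω).2, (hq01 ω).2]
  -- choose thresholds by the intermediate value theorem
  have hivt : ∀ a, ∃ tt ∈ Icc (0:ℝ) 1, H a tt = r a := by
    intro a
    have hsub := intermediate_value_Icc' (zero_le_one) (hHcont a).continuousOn
    have : r a ∈ Icc (H a 1) (H a 0) := by
      rw [hH1 a]; exact ⟨hr0 a, hrH0 a⟩
    obtain ⟨tt, htt, heq⟩ := hsub this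
    exact ⟨tt, htt, heq⟩
  choose t ht01 htH using hivt
  -- the new rule
  set d' : 𝒳 → ℝ := fun x => if t (g x) ≤ p x then (1:ℝ) else 0 with hd'def
  have hd'meas : Measurable d' := by
    have hset : MeasurableSet {x : 𝒳 | t (g x) ≤ p x} := by
      have : {x : 𝒳 | t (g x) ≤ p x} = ⋃ a : G, (g ⁻¹' {a} ∩ {x | t a ≤ p x}) := by
        ext x
        simp only [mem_setOf_eq, mem_iUnion, mem_inter_iff, mem_preimage, mem_singleton_iff]
        constructor
        · intro h; exact ⟨g x, rfl, h⟩
        · rintro ⟨a, rfl, h⟩; exact h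
      rw [this]
      exact MeasurableSet.iUnion fun a =>
        (hg (measurableSet_singleton a)).inter (measurableSet_le measurable_const hp)
    exact Measurable.ite hset measurable_const measurable_const
  have hd'01 : ∀ x, d' x ∈ Icc (0:ℝ) 1 := by
    intro x
    rw [hd'def]
    dsimp only
    split <;> norm_num
  set e' : Ω → ℝ := fun ω => d' (X ω) with he'def
  have he'meas : Measurable e' := hd'meas.comp hX
  have he'01 : ∀ ω, e' ω ∈ Icc (0:ℝ) 1 := fun ω => hd'01 (X ω)
  -- transfer lemma
  have transfer : ∀ (a : G) (h : 𝒳 → ℝ), Measurable h → (∀ x, |h x| ≤ 1) →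
      ∫ ω in {ω | Y ω = 0 ∧ g (X ω) = a}, h (X ω) ∂μ
        = ∫ ω in A a, (1 - q ω) * h (X ω) ∂μ := by
    intro a h hh hh1
    set k : 𝒳 → ℝ := fun x => h x * (if g x = a then (1:ℝ) else 0) with hkdef
    have hk : Measurable k := hh.mul
      (Measurable.ite (hg (measurableSet_singleton a)) measurable_const measurable_const)
    have hk1 : ∀ x, |k x| ≤ 1 := by
      intro x
      rw [hkdef]
      dsimp only
      rw [abs_mul]
      split
      · simpa using hh1 x
      · simp
    have hSmeas : MeasurableSet {ω | Y ω = 0 ∧ g (X ω) = a} := by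
      have : {ω | Y ω = 0 ∧ g (X ω) = a} = Y ⁻¹' {0} ∩ A a := rfl
      rw [this]
      exact (hY (measurableSet_singleton 0)).inter (hA a)
    have step1 : ∫ ω in {ω | Y ω = 0 ∧ g (X ω) = a}, h (X ω) ∂μ
        = ∫ ω, (1 - Y ω) * k (X ω) ∂μ := by
      rw [← integral_indicator hSmeas]
      apply integral_congr_ae
      apply Filter.Eventually.of_forall
      intro ω
      dsimp only
      by_cases hmem : ω ∈ {ω | Y ω = 0 ∧ g (X ω) = a}
      · rw [indicator_of_mem hmem]
        obtain ⟨hy0, hga⟩ := hmem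
        rw [hkdef]; simp [hy0, hga]
      · rw [indicator_of_notMem hmem]
        rw [mem_setOf_eq, not_and_or] at hmem
        rcases hmem with hy | hga
        · have : Y ω = 1 := (hY01 ω).resolve_left hy
          rw [this]; ring
        · rw [hkdef]; simp [hga]
    have hintk : Integrable (fun ω => k (X ω)) μ :=
      intg _ (hk.comp hX) (fun ω => le_trans (hk1 (X ω)) one_le_two)
    have hintYk : Integrable (fun ω => Y ω * k (X ω)) μ := by
      apply intg _ (hY.mul (hk.comp hX))
      intro ω
      show |Y ω * k (X ω)| ≤ 2
      rw [abs_mul]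
      rcases hY01 ω with h0 | h1
      · rw [h0]; simp
      · rw [h1]; simpa using le_trans (hk1 (X ω)) one_le_two
    have hintqk : Integrable (fun ω => q ω * k (X ω)) μ := by
      apply intg _ (hq.mul (hk.comp hX))
      intro ω
      show |q ω * k (X ω)| ≤ 2
      rw [abs_mul]
      have h1 : |q ω| ≤ 1 := by
        rw [abs_le]; exact ⟨by linarith [(hq01 ω).1], (hq01 ω).2⟩
      calc |q ω| * |k (X ω)| ≤ 1 * 1 :=
            mul_le_mul h1 (hk1 (X ω)) (abs_nonneg _) zero_le_one
        _ ≤ 2 := by norm_num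
    have step2 : ∫ ω, (1 - Y ω) * k (X ω) ∂μ
        = ∫ ω, k (X ω) ∂μ - ∫ ω, Y ω * k (X ω) ∂μ := by
      rw [← integral_sub hintk hintYk]
      congr 1; ext ω; ring
    have step3 : ∫ ω, (1 - q ω) * k (X ω) ∂μ
        = ∫ ω, k (X ω) ∂μ - ∫ ω, q ω * k (X ω) ∂μ := by
      rw [← integral_sub hintk hintqk]
      congr 1; ext ω; ring
    have hriskk := hrisk k hk ⟨1, hk1⟩
    have step4 : ∫ ω, (1 - q ω) * k (X ω) ∂μ = ∫ ω in A a, (1 - q ω) * h (X ω) ∂μ := by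
      rw [← integral_indicator (hA a)]
      apply integral_congr_ae
      apply Filter.Eventually.of_forall
      intro ω
      by_cases hmem : ω ∈ A a
      · rw [indicator_of_mem hmem, hkdef]
        have : g (X ω) = a := hmem
        simp [this]
      · rw [indicator_of_notMem hmem, hkdef]
        have : ¬ g (X ω) = a := hmem
        simp [this]
    rw [step1, step2, hriskk, ← step3, step4]
  -- numerator equality, hence FPR equality
  have hb1 : ∀ x, |d x| ≤ 1 := by
    intro x; rw [abs_le]; exact ⟨by linarith [(hd01 x).1], (hd01 x).2⟩
  have hb1' : ∀ x, |d' x| ≤ 1 := by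
    intro x; rw [abs_le]; exact ⟨by linarith [(hd'01 x).1], (hd'01 x).2⟩
  have hsetint : ∀ a, ∫ ω in A a, (1 - q ω) * e' ω ∂μ = r a := by
    intro a
    rw [← htH a]
    apply setIntegral_congr_fun (hA a)
    intro ω hω
    have hga : g (X ω) = a := hω
    rw [he'def, hd'def]
    dsimp only
    rw [hga]
  have hnum : ∀ a, ∫ ω in {ω | Y ω = 0 ∧ g (X ω) = a}, d' (X ω) ∂μ
      = ∫ ω in {ω | Y ω = 0 ∧ g (X ω) = a}, d (X ω) ∂μ := by
    intro a
    rw [transfer a d' hd'meas hb1', transfer a d hd hb1]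
    exact hsetint a
  have hFPR : ∀ a, FPR μ X Y g d' a = FPR μ X Y g d a := by
    intro a
    unfold FPR
    rw [hnum a]
  -- per-group analysis
  have hbnddiff : ∀ ω, |e' ω - e ω| ≤ 2 := by
    intro ω
    have := (he01 ω).1; have := (he01 ω).2
    have := (he'01 ω).1; have := (he'01 ω).2
    rw [abs_le]; constructor <;> linarith
  have hqb : ∀ ω, |q ω| ≤ 1 := by
    intro ω; rw [abs_le]; exact ⟨by linarith [(hq01 ω).1], (hq01 ω).2⟩
  have hintqd : ∀ s : Set Ω, Integrable (fun ω => q ω * (e' ω - e ω)) (μ.restrict s) := by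
    intro s
    apply intgr _ _ (hq.mul (he'meas.sub he))
    intro ω
    show |q ω * (e' ω - e ω)| ≤ 2
    rw [abs_mul]
    nlinarith [abs_nonneg (q ω), abs_nonneg (e' ω - e ω), hqb ω, hbnddiff ω]
  have hintd : ∀ s : Set Ω, Integrable (fun ω => e' ω - e ω) (μ.restrict s) :=
    fun s => intgr _ _ (he'meas.sub he) hbnddiff
  set J : G → ℝ := fun a => ∫ ω in A a, q ω * (e' ω - e ω) ∂μ with hJdef
  -- ∫ (1-q) e' = ∫ (1-q) e on each group
  have hsub : ∀ a, ∫ ω in A a, (1 - q ω) * e' ω ∂μ = ∫ ω in A a, (1 - q ω) * e ω ∂μ := by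
    intro a; rw [hsetint a, hrdef]
  have hintqe : ∀ (s : Set Ω) (f : Ω → ℝ), Measurable f → (∀ ω, |f ω| ≤ 1) →
      Integrable (fun ω => q ω * f ω) (μ.restrict s) := by
    intro s f hf hfb
    apply intgr _ _ (hq.mul hf)
    intro ω
    show |q ω * f ω| ≤ 2
    rw [abs_mul]
    nlinarith [abs_nonneg (q ω), abs_nonneg (f ω), hqb ω, hfb ω]
  have hinte : ∀ (s : Set Ω) (f : Ω → ℝ), Measurable f → (∀ ω, |f ω| ≤ 1) →
      Integrable f (μ.restrict s) := by
    intro s f hf hfb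
    exact intgr _ _ hf (fun ω => le_trans (hfb ω) one_le_two)
  have heb : ∀ ω, |e ω| ≤ 1 := by
    intro ω; rw [abs_le]; exact ⟨by linarith [(he01 ω).1], (he01 ω).2⟩
  have heb' : ∀ ω, |e' ω| ≤ 1 := by
    intro ω; rw [abs_le]; exact ⟨by linarith [(he'01 ω).1], (he'01 ω).2⟩
  -- ∫_{A a} (e' - e) = J a
  have hJeq : ∀ a, ∫ ω in A a, (e' ω - e ω) ∂μ = J a := by
    intro a
    have h1 : ∫ ω in A a, (1 - q ω) * e' ω ∂μ
        = ∫ ω in A a, e' ω ∂μ - ∫ ω in A a, q ω * e' ω ∂μ := by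
      rw [← integral_sub (hinte _ _ he'meas heb') (hintqe _ _ he'meas heb')]
      congr 1; ext ω; ring
    have h2 : ∫ ω in A a, (1 - q ω) * e ω ∂μ
        = ∫ ω in A a, e ω ∂μ - ∫ ω in A a, q ω * e ω ∂μ := by
      rw [← integral_sub (hinte _ _ he heb) (hintqe _ _ he heb)]
      congr 1; ext ω; ring
    have h3 : ∫ ω in A a, (e' ω - e ω) ∂μ
        = ∫ ω in A a, e' ω ∂μ - ∫ ω in A a, e ω ∂μ :=
      integral_sub (hinte _ _ he'meas heb') (hinte _ _ he heb)
    have h4 : J a = ∫ ω in A a, q ω * e' ω ∂μ - ∫ ω in A a, q ω * e ω ∂μ := by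
      rw [hJdef]
      dsimp only
      rw [← integral_sub (hintqe _ _ he'meas heb') (hintqe _ _ he heb)]
      congr 1; ext ω; ring
    have h5 := hsub a
    rw [h1, h2] at h5
    rw [h3, h4]
    linarith
  -- the key nonnegativity
  have hInonneg : ∀ a, 0 ≤ ∫ ω in A a, (q ω - t a) * (e' ω - e ω) ∂μ := by
    intro a
    apply setIntegral_nonneg (hA a)
    intro ω hω
    have hga : g (X ω) = a := hω
    have he'val : e' ω = if t a ≤ q ω then (1:ℝ) else 0 := by
      rw [he'def, hd'def]; dsimp only; rw [hga]
    by_cases hle : t a ≤ q ω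
    · rw [he'val, if_pos hle]
      have := (he01 ω).2
      nlinarith
    · rw [he'val, if_neg hle]
      push_neg at hle
      have := (he01 ω).1
      nlinarith
  have hIeq : ∀ a, ∫ ω in A a, (q ω - t a) * (e' ω - e ω) ∂μ = (1 - t a) * J a := by
    intro a
    have h1 : ∫ ω in A a, (q ω - t a) * (e' ω - e ω) ∂μ
        = J a - t a * ∫ ω in A a, (e' ω - e ω) ∂μ := by
      rw [hJdef]
      dsimp only
      rw [← integral_const_mul, ← integral_sub (hintqd _) ((hintd _).const_mul _)]
      congr 1; ext ω; ring
    rw [h1, hJeq a]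
    ring
  -- zero integral ⇒ a.e. equality on the group
  have hzero : ∀ a, (∫ ω in A a, (q ω - t a) * (e' ω - e ω) ∂μ = 0) →
      e' =ᵐ[μ.restrict (A a)] e := by
    intro a h0
    have hnn : ∀ᵐ ω ∂(μ.restrict (A a)), 0 ≤ (q ω - t a) * (e' ω - e ω) := by
      rw [ae_restrict_iff' (hA a)]
      apply Filter.Eventually.of_forall
      intro ω hω
      have hga : g (X ω) = a := hω
      have he'val : e' ω = if t a ≤ q ω then (1:ℝ) else 0 := by
        rw [he'def, hd'def]; dsimp only; rw [hga]
      by_cases hle : t a ≤ q ω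
      · rw [he'val, if_pos hle]; nlinarith [(he01 ω).2]
      · rw [he'val, if_neg hle]; push_neg at hle; nlinarith [(he01 ω).1]
    have hint : Integrable (fun ω => (q ω - t a) * (e' ω - e ω)) (μ.restrict (A a)) := by
      apply intgr _ _ ((hq.sub measurable_const).mul (he'meas.sub he))
      intro ω
      show |(q ω - t a) * (e' ω - e ω)| ≤ 2
      rw [abs_mul]
      have h1 : |q ω - t a| ≤ 2 := by
        rw [abs_le]
        constructor <;> nlinarith [(hq01 ω).1, (hq01 ω).2, (ht01 a).1, (ht01 a).2]
      have h2 : |e' ω - e ω| ≤ 1 := by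
        rw [abs_le]
        constructor <;> nlinarith [(he01 ω).1, (he01 ω).2, (he'01 ω).1, (he'01 ω).2]
      nlinarith [abs_nonneg (q ω - t a), abs_nonneg (e' ω - e ω)]
    have hae0 : (fun ω => (q ω - t a) * (e' ω - e ω)) =ᵐ[μ.restrict (A a)] 0 :=
      (integral_eq_zero_iff_of_nonneg_ae hnn hint).1 h0
    filter_upwards [hae0, hner a (t a)] with ω hω hne
    have : (q ω - t a) * (e' ω - e ω) = 0 := hω
    rcases mul_eq_zero.1 this with h | h
    · exact absurd (by linarith [sub_eq_zero.1 h] : q ω = t a) hne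
    · linarith [sub_eq_zero.1 h]
  -- J a ≥ 0 and J a = 0 → a.e. equality
  have hkey : ∀ a, 0 ≤ J a ∧ (J a = 0 → e' =ᵐ[μ.restrict (A a)] e) := by
    intro a
    rcases lt_or_eq_of_le (ht01 a).2 with hlt | heq1
    · -- t a < 1
      have hpos : (0:ℝ) < 1 - t a := by linarith
      have h1 : 0 ≤ (1 - t a) * J a := by rw [← hIeq a]; exact hInonneg a
      have hJnn : 0 ≤ J a := (mul_nonneg_iff_of_pos_left hpos).1 h1
      refine ⟨hJnn, fun hJ0 => ?_⟩
      apply hzero a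
      rw [hIeq a, hJ0, mul_zero]
    · -- t a = 1
      have hI0 : ∫ ω in A a, (q ω - t a) * (e' ω - e ω) ∂μ = 0 := by
        rw [hIeq a, ← heq1]; ring
      have hae := hzero a hI0
      have hJ0 : J a = 0 := by
        have : J a = ∫ ω in A a, (0:ℝ) ∂μ := by
          apply integral_congr_ae
          filter_upwards [hae] with ω hω
          rw [hω]; ring
        rw [this, integral_zero]
      exact ⟨le_of_eq hJ0.symm, fun _ => hae⟩
  -- partition of Ω
  have hUnion : (⋃ a : G, A a) = univ := by
    ext ω
    simp only [mem_iUnion, mem_univ, iff_true]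
    exact ⟨g (X ω), rfl⟩
  have hdisj : Pairwise (Function.onFun Disjoint A) := by
    intro a b hab
    rw [Function.onFun, Set.disjoint_left]
    intro ω hωa hωb
    exact hab ((hωa : g (X ω) = a).symm.trans (hωb : g (X ω) = b))
  have hpart : ∀ F : Ω → ℝ, Measurable F → (∀ ω, |F ω| ≤ 2) →
      ∫ ω, F ω ∂μ = ∑ a : G, ∫ ω in A a, F ω ∂μ := by
    intro F hF hFb
    rw [← setIntegral_univ, ← hUnion,
      integral_iUnion hA hdisj ((intg F hF hFb).integrableOn),
      tsum_fintype]
  -- the total gain S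
  set S : ℝ := ∫ ω, q ω * (e' ω - e ω) ∂μ with hSdef
  have hSsum : S = ∑ a : G, J a := by
    rw [hSdef]
    apply hpart
    · exact hq.mul (he'meas.sub he)
    · intro ω
      rw [abs_mul]
      nlinarith [abs_nonneg (q ω), abs_nonneg (e' ω - e ω), hqb ω, hbnddiff ω]
  have hSnn : 0 ≤ S := by
    rw [hSsum]
    exact Finset.sum_nonneg fun a _ => (hkey a).1
  have hSne : S ≠ 0 := by
    intro hS0
    have hall : ∀ a : G, J a = 0 := by
      intro a
      have := (Finset.sum_eq_zero_iff_of_nonneg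
        (fun a _ => (hkey a).1)).1 (hSsum ▸ hS0)
      exact this a (Finset.mem_univ a)
    have haes : ∀ a : G, e' =ᵐ[μ.restrict (A a)] e := fun a => (hkey a).2 (hall a)
    -- combine into a global a.e. statement
    have hN : MeasurableSet {ω | ¬ e' ω = e ω} :=
      (measurableSet_eq_fun he'meas he).compl
    have hglob : μ {ω | ¬ e' ω = e ω} = 0 := by
      have hcov : {ω | ¬ e' ω = e ω} ⊆ ⋃ a : G, ({ω | ¬ e' ω = e ω} ∩ A a) := by
        intro ω hω
        exact mem_iUnion.2 ⟨g (X ω), hω, rfl⟩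
      refine le_antisymm ?_ (by simp)
      calc μ {ω | ¬ e' ω = e ω} ≤ μ (⋃ a : G, ({ω | ¬ e' ω = e ω} ∩ A a)) :=
            measure_mono hcov
        _ ≤ ∑' a : G, μ ({ω | ¬ e' ω = e ω} ∩ A a) := measure_iUnion_le _
        _ = 0 := by
            have : ∀ a : G, μ ({ω | ¬ e' ω = e ω} ∩ A a) = 0 := by
              intro a
              have h1 : (μ.restrict (A a)) {ω | ¬ e' ω = e ω} = 0 := by
                have h := haes a
                rw [Filter.EventuallyEq, ae_iff] at h
                exact h
              rw [Measure.restrict_apply hN] at h1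
              exact h1
            simp [this]
    apply hnotthr
    refine ⟨t, ht01, ?_⟩
    rw [ae_iff]
    refine le_antisymm (le_trans (measure_mono ?_) (le_of_eq hglob)) (by simp)
    intro ω hω
    simp only [mem_setOf_eq] at hω ⊢
    intro hcon
    exact hω hcon.symm
  have hSpos : 0 < S := lt_of_le_of_ne hSnn (Ne.symm hSne)
  -- final utility computation
  refine ⟨d', hd'meas, hd'01, hFPR, ?_⟩
  have hY'1 : ∫ ω, Y ω * e' ω ∂μ = ∫ ω, q ω * e' ω ∂μ := hrisk d' hd'meas ⟨1, hb1'⟩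
  have hY'2 : ∫ ω, Y ω * e ω ∂μ = ∫ ω, q ω * e ω ∂μ := hrisk d hd ⟨1, hb1⟩
  have hintqf : ∀ (f : Ω → ℝ), Measurable f → (∀ ω, |f ω| ≤ 1) →
      Integrable (fun ω => q ω * f ω) μ := by
    intro f hf hfb
    apply intg _ (hq.mul hf)
    intro ω
    show |q ω * f ω| ≤ 2
    rw [abs_mul]
    calc |q ω| * |f ω| ≤ 1 * 1 := mul_le_mul (hqb ω) (hfb ω) (abs_nonneg _) zero_le_one
      _ ≤ 2 := by norm_num
  have hdiff1 : ∫ ω, q ω * e' ω ∂μ - ∫ ω, q ω * e ω ∂μ = S := by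
    rw [hSdef, ← integral_sub (hintqf _ he'meas heb') (hintqf _ he heb)]
    congr 1; ext ω; ring
  have hdiff2 : ∫ ω, e' ω ∂μ - ∫ ω, e ω ∂μ = S := by
    have h1 : ∫ ω, (e' ω - e ω) ∂μ = ∑ a : G, ∫ ω in A a, (e' ω - e ω) ∂μ :=
      hpart _ (he'meas.sub he) hbnddiff
    have h2 : ∫ ω, (e' ω - e ω) ∂μ = ∫ ω, e' ω ∂μ - ∫ ω, e ω ∂μ := by
      apply integral_sub
      · exact intg _ he'meas (fun ω => le_trans (heb' ω) one_le_two)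
      · exact intg _ he (fun ω => le_trans (heb ω) one_le_two)
    rw [← h2, h1, hSsum]
    exact Finset.sum_congr rfl fun a _ => hJeq a
    
  have hfin : (1 - c) * S > 0 := mul_pos (by linarith) hSpos
  have hexp : (1 - c) * S = S - c * S := by ring
  show (∫ ω, Y ω * e ω ∂μ) - c * ∫ ω, e ω ∂μ < (∫ ω, Y ω * e' ω ∂μ) - c * ∫ ω, e' ω ∂μ
  rw [hY'1, hY'2]
  have hc3 : c * ∫ ω, e' ω ∂μ - c * ∫ ω, e ω ∂μ = c * S := by
    rw [← hdiff2]; ring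
  linarith [hdiff1, hdiff2, hfin, hexp, hc3]
end
end

section
/- Let P be a real random variable whose law has positive density on [0,1], and for α ∈ [0,1] let q(α) ∈ [0,1] be the unique value with P(P ≥ q(α)) = α. Then the function h(α) = E[P·1{P ≥ q(α)}] is strictly concave on [0,1]. -/
open MeasureTheory ProbabilityTheory Set

noncomputable section

/-- if `P` is a real random variable whose law has positive density on
`[0,1]` and, for `α ∈ [0,1]`, `q(α) ∈ [0,1]` is the (unique) value with
`P(P ≥ q(α)) = α`, then `h(α) = E[P·1{P ≥ q(α)}]` is strictly concave on `[0,1]`. -/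
theorem stmt_19
    {Ω : Type*} [MeasurableSpace Ω]
    (μ : Measure Ω) [IsProbabilityMeasure μ]
    (P : Ω → ℝ) (hP : Measurable P)
    (hdens : PosDensity01 (Measure.map P μ))
    (q : ℝ → ℝ)
    (hq : ∀ α ∈ Icc (0:ℝ) 1, q α ∈ Icc (0:ℝ) 1 ∧ (μ {ω | q α ≤ P ω}).toReal = α) :
    StrictConcaveOn ℝ (Icc (0:ℝ) 1)
      (fun α => ∫ ω, P ω * (if q α ≤ P ω then (1:ℝ) else 0) ∂μ) := by
  classical
  set ν : Measure ℝ := Measure.map P μ with hνdef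
  have hprob : IsProbabilityMeasure ν := Measure.isProbabilityMeasure_map hP.aemeasurable
  obtain ⟨φ, hφeq, hφpos, hφzero⟩ := hdens
  -- ν is absolutely continuous wrt Lebesgue, hence atomless
  have hac : ν ≪ (volume : Measure ℝ) := by
    refine Measure.AbsolutelyContinuous.mk (fun s hs hs0 => ?_)
    rw [hφeq, withDensity_apply _ hs, Measure.restrict_eq_zero.mpr hs0,
      lintegral_zero_measure]
  have : NullSingletonClass ν := ⟨fun a => hac Real.volume_singleton⟩
  -- ν-a.e. x ∈ [0,1]
  have hout : ν ((Icc (0:ℝ) 1)ᶜ) = 0 := by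
    rw [hφeq, withDensity_apply _ measurableSet_Icc.compl]
    have hz : φ =ᵐ[volume.restrict (Icc (0:ℝ) 1)ᶜ] 0 := by
      filter_upwards [ae_restrict_of_ae hφzero,
        ae_restrict_mem measurableSet_Icc.compl] with x h1 h2 using h1 h2
    rw [lintegral_congr_ae hz]
    simp
  have hae01 : ∀ᵐ x ∂ν, x ∈ Icc (0:ℝ) 1 := by
    rw [ae_iff]
    have he : {x : ℝ | ¬ x ∈ Icc (0:ℝ) 1} = (Icc (0:ℝ) 1)ᶜ := rfl
    rw [he]; exact hout
  -- the identity is ν-integrable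
  have hint : Integrable (fun x : ℝ => x) ν := by
    refine Integrable.mono' (integrable_const 1) measurable_id.aestronglyMeasurable ?_
    filter_upwards [hae01] with x hx
    rw [Real.norm_eq_abs, abs_le]
    exact ⟨by linarith [hx.1], hx.2⟩
  -- the defining property of q in terms of ν
  have hG : ∀ α ∈ Icc (0:ℝ) 1, (ν (Ici (q α))).toReal = α := by
    intro α hα
    have h2 := (hq α hα).2
    have : ν (Ici (q α)) = μ {ω | q α ≤ P ω} := by
      rw [hνdef, Measure.map_apply hP measurableSet_Ici]
      rfl
    rw [this]; exact h2
  -- rewrite the function as a set integral wrt ν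
  have hrep : ∀ α : ℝ, (∫ ω, P ω * (if q α ≤ P ω then (1:ℝ) else 0) ∂μ)
      = ∫ t in Ici (q α), t ∂ν := by
    intro α
    have hm : Measurable fun x : ℝ => x * (if q α ≤ x then (1:ℝ) else 0) :=
      measurable_id.mul (Measurable.ite measurableSet_Ici measurable_const measurable_const)
    have h1 : (∫ t, t * (if q α ≤ t then (1:ℝ) else 0) ∂ν)
        = ∫ ω, P ω * (if q α ≤ P ω then (1:ℝ) else 0) ∂μ := by
      rw [hνdef, integral_map hP.aemeasurable hm.aestronglyMeasurable]
    have h2 : (fun t : ℝ => t * (if q α ≤ t then (1:ℝ) else 0))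
        = (Ici (q α)).indicator (fun t => t) := by
      funext t
      by_cases h : q α ≤ t <;> simp [indicator, h]
    rw [← h1, h2, integral_indicator measurableSet_Ici]
  -- q is strictly antitone on [0,1]
  have hqlt : ∀ u v : ℝ, u ∈ Icc (0:ℝ) 1 → v ∈ Icc (0:ℝ) 1 → u < v → q v < q u := by
    intro u v hu hv huv
    by_contra hle
    push_neg at hle
    have h1 : ν (Ici (q v)) ≤ ν (Ici (q u)) := measure_mono (Ici_subset_Ici.mpr hle)
    have h2 := ENNReal.toReal_mono (measure_ne_top ν _) h1
    rw [hG u hu, hG v hv] at h2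
    linarith
  -- mass of the band
  have hmass : ∀ u v : ℝ, u ∈ Icc (0:ℝ) 1 → v ∈ Icc (0:ℝ) 1 → u < v →
      (ν (Ico (q v) (q u))).toReal = v - u := by
    intro u v hu hv huv
    have hlt := hqlt u v hu hv huv
    have hdis : Disjoint (Ico (q v) (q u)) (Ici (q u)) :=
      disjoint_left.mpr fun t ht ht' => absurd ht' (not_le.mpr ht.2)
    have hsplit : ν (Ici (q v)) = ν (Ico (q v) (q u)) + ν (Ici (q u)) := by
      rw [← measure_union hdis measurableSet_Ici, Ico_union_Ici_eq_Ici hlt.le]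
    have h3 : (ν (Ici (q v))).toReal
        = (ν (Ico (q v) (q u))).toReal + (ν (Ici (q u))).toReal := by
      rw [hsplit, ENNReal.toReal_add (measure_ne_top _ _) (measure_ne_top _ _)]
    rw [hG u hu, hG v hv] at h3
    linarith
  -- difference of the integrals
  have hisplit : ∀ u v : ℝ, u ∈ Icc (0:ℝ) 1 → v ∈ Icc (0:ℝ) 1 → u < v →
      (∫ t in Ici (q v), t ∂ν) - (∫ t in Ici (q u), t ∂ν)
        = ∫ t in Ico (q v) (q u), t ∂ν := by
    intro u v hu hv huv
    have hlt := hqlt u v hu hv huv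
    have hdis : Disjoint (Ico (q v) (q u)) (Ici (q u)) :=
      disjoint_left.mpr fun t ht ht' => absurd ht' (not_le.mpr ht.2)
    have hsplit : (∫ t in Ici (q v), t ∂ν)
        = (∫ t in Ico (q v) (q u), t ∂ν) + ∫ t in Ici (q u), t ∂ν := by
      rw [← setIntegral_union hdis measurableSet_Ici hint.integrableOn hint.integrableOn,
        Ico_union_Ici_eq_Ici hlt.le]
    linarith
  -- lower bound for the band integral
  have hlb : ∀ a b : ℝ, a < b → ν (Ico a b) ≠ 0 →
      a * (ν (Ico a b)).toReal < ∫ t in Ico a b, t ∂ν := by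
    intro a b hab hne
    have hci : IntegrableOn (fun _ : ℝ => a) (Ico a b) ν :=
      integrableOn_const (measure_ne_top ν _)
    have hnn : 0 ≤ᵐ[ν.restrict (Ico a b)] fun t : ℝ => t - a := by
      filter_upwards [ae_restrict_mem measurableSet_Ico] with t ht
      simp only [Pi.zero_apply]
      linarith [ht.1]
    have hpos : 0 < ∫ t in Ico a b, (t - a) ∂ν := by
      rw [setIntegral_pos_iff_support_of_nonneg_ae hnn (hint.integrableOn.sub hci)]
      · have hsupp : Function.support (fun t : ℝ => t - a) ∩ Ico a b = Ioo a b := by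
          ext t
          simp only [mem_inter_iff, Function.mem_support, mem_Ico, mem_Ioo, sub_ne_zero]
          constructor
          · rintro ⟨hne', h1, h2⟩
            exact ⟨lt_of_le_of_ne h1 (Ne.symm hne'), h2⟩
          · rintro ⟨h1, h2⟩
            exact ⟨ne_of_gt h1, h1.le, h2⟩
        rw [hsupp]
        have : ν (Ico a b) = ν (Ioo a b) := (measure_congr Ioo_ae_eq_Ico).symm
        rw [← this]
        exact hne.bot_lt
    have heq : ∫ t in Ico a b, (t - a) ∂ν
        = (∫ t in Ico a b, t ∂ν) - (ν (Ico a b)).toReal * a := by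
      rw [integral_sub hint.integrableOn hci, setIntegral_const, smul_eq_mul, measureReal_def]
    rw [heq] at hpos
    linarith [mul_comm a (ν (Ico a b)).toReal]
  -- upper bound for the band integral
  have hub : ∀ a b : ℝ, a < b → ν (Ico a b) ≠ 0 →
      (∫ t in Ico a b, t ∂ν) < b * (ν (Ico a b)).toReal := by
    intro a b hab hne
    have hci : IntegrableOn (fun _ : ℝ => b) (Ico a b) ν :=
      integrableOn_const (measure_ne_top ν _)
    have hnn : 0 ≤ᵐ[ν.restrict (Ico a b)] fun t : ℝ => b - t := by
      filter_upwards [ae_restrict_mem measurableSet_Ico] with t ht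
      simp only [Pi.zero_apply]
      linarith [ht.2]
    have hpos : 0 < ∫ t in Ico a b, (b - t) ∂ν := by
      rw [setIntegral_pos_iff_support_of_nonneg_ae hnn (hci.sub hint.integrableOn)]
      · have hsupp : Function.support (fun t : ℝ => b - t) ∩ Ico a b = Ico a b := by
          refine inter_eq_right.mpr fun t ht => ?_
          simp only [Function.mem_support, sub_ne_zero]
          exact ne_of_gt ht.2
        rw [hsupp]
        exact hne.bot_lt
    have heq : ∫ t in Ico a b, (b - t) ∂ν
        = (ν (Ico a b)).toReal * b - ∫ t in Ico a b, t ∂ν := by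
      rw [integral_sub hci hint.integrableOn, setIntegral_const, smul_eq_mul, measureReal_def]
    rw [heq] at hpos
    linarith [mul_comm b (ν (Ico a b)).toReal]
  -- conclude via the slope criterion
  refine strictConcaveOn_of_slope_strict_anti_adjacent (convex_Icc 0 1) ?_
  intro x y z hx hz hxy hyz
  have hy : y ∈ Icc (0:ℝ) 1 := ⟨hx.1.trans hxy.le, hyz.le.trans hz.2⟩
  simp only [hrep]
  -- band (q z, q y) for the pair (y, z)
  have hm1 : (ν (Ico (q z) (q y))).toReal = z - y := hmass y z hy hz hyz
  have hm2 : (ν (Ico (q y) (q x))).toReal = y - x := hmass x y hx hy hxy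
  have hne1 : ν (Ico (q z) (q y)) ≠ 0 := by
    intro h; rw [h] at hm1; simp at hm1; linarith
  have hne2 : ν (Ico (q y) (q x)) ≠ 0 := by
    intro h; rw [h] at hm2; simp at hm2; linarith
  have hd1 := hisplit y z hy hz hyz
  have hd2 := hisplit x y hx hy hxy
  have hq1 := hqlt y z hy hz hyz
  have hq2 := hqlt x y hx hy hxy
  have hub1 := hub (q z) (q y) hq1 hne1
  have hlb2 := hlb (q y) (q x) hq2 hne2
  rw [hm1] at hub1
  rw [hm2] at hlb2
  rw [hd1, hd2]
  rw [div_lt_div_iff₀ (by linarith) (by linarith)]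
  nlinarith [hub1, hlb2, sub_pos.mpr hxy, sub_pos.mpr hyz]
end
end
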